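/- For every n ≥ 4, the image of the homomorphism Φ_3 : Γ̂_n^4 → ℤ[n]_3 is a free abelian group of rank N_n = C(n,3) − 1. -/

import Mathlib

/-- Ordered quadruples of elements of `Fin n`, used to index the generators `(ijkl)`. -/
abbrev Quad (n : ℕ) : Type := Fin n × Fin n × Fin n × Fin n

/-- The underlying set `{i, j, k, l}` of a quadruple `(i, j, k, l)`. -/
def qFinset {n : ℕ} (q : Quad n) : Finset (Fin n) := {q.1, q.2.1, q.2.2.1, q.2.2.2}

/-- The four entries of the quadruple are pairwise distinct. -/
def qDistinct {n : ℕ} (q : Quad n) : Prop := (qFinset q).card = 4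

/-- The defining relators of the group `Γ̂_n^4` of Kim–Manturov:
generators indexed by quadruples of distinct elements (non-distinct quadruples are killed),
commutativity relations (2), signed pentagon relations (3') and signed dihedral
relations (4'). -/
def gammaHatRels (n : ℕ) : Set (FreeGroup (Quad n)) :=
  {w | ∃ q : Quad n, ¬ qDistinct q ∧ w = FreeGroup.of q} ∪
  {w | ∃ q r : Quad n, qDistinct q ∧ qDistinct r ∧ (qFinset q ∩ qFinset r).card ≤ 2 ∧
      w = FreeGroup.of q * FreeGroup.of r * (FreeGroup.of q)⁻¹ * (FreeGroup.of r)⁻¹} ∪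
  {w | ∃ i j k l m : Fin n, ({i, j, k, l, m} : Finset (Fin n)).card = 5 ∧
      w = FreeGroup.of (i, j, k, l) * FreeGroup.of (i, j, l, m) * FreeGroup.of (j, k, l, m) *
        (FreeGroup.of (i, j, k, m))⁻¹ * (FreeGroup.of (i, k, l, m))⁻¹} ∪
  {w | ∃ i j k l : Fin n, qDistinct (i, j, k, l) ∧
      (w = FreeGroup.of (i, j, k, l) * FreeGroup.of (j, k, l, i) ∨
       w = FreeGroup.of (i, j, k, l) * FreeGroup.of (l, k, j, i))}

/-- The group `Γ̂_n^4` of Kim–Manturov. -/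
abbrev GammaHat (n : ℕ) : Type := PresentedGroup (gammaHatRels n)

/-- The generator `(ijkl)` of `Γ̂_n^4`. -/
def gh {n : ℕ} (q : Quad n) : GammaHat n := PresentedGroup.of q

/-- The free abelian group `ℤ[n]_3` on the set of 3-element subsets of `Fin n`. -/
abbrev ZThree (n : ℕ) : Type := {s : Finset (Fin n) // s.card = 3} →₀ ℤ

/-- The basis element `{i, j, k}` of `ℤ[n]_3` (equal to `0` if `i, j, k` are not distinct). -/
noncomputable def tri {n : ℕ} (i j k : Fin n) : ZThree n :=
  if h : ({i, j, k} : Finset (Fin n)).card = 3 then Finsupp.single ⟨{i, j, k}, h⟩ 1 else 0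

/-- The free abelian group `ℤ[n]_2` on the set of 2-element subsets of `Fin n`. -/
abbrev ZTwo (n : ℕ) : Type := {s : Finset (Fin n) // s.card = 2} →₀ ℤ

/-- The basis element `{i, j}` of `ℤ[n]_2` (equal to `0` if `i ≠ j` fails). -/
noncomputable def pair {n : ℕ} (i j : Fin n) : ZTwo n :=
  if h : ({i, j} : Finset (Fin n)).card = 2 then Finsupp.single ⟨{i, j}, h⟩ 1 else 0
-- ==================== auxiliary development ====================
namespace KMaux

open Module Finset

variable {n : ℕ}

abbrev T3 (n : ℕ) := {s : Finset (Fin n) // s.card = 3}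

lemma card3 {i j k : Fin n} (hij : i ≠ j) (hik : i ≠ k) (hjk : j ≠ k) :
    ({i, j, k} : Finset (Fin n)).card = 3 := by
  rw [Finset.card_insert_of_notMem (by simp [hij, hik]),
    Finset.card_insert_of_notMem (by simp [hjk]), Finset.card_singleton]

lemma card_le3 (a b c : Fin n) : ({a, b, c} : Finset (Fin n)).card ≤ 3 := by
  refine (Finset.card_insert_le _ _).trans (Nat.succ_le_succ ?_)
  refine (Finset.card_insert_le _ _).trans (Nat.succ_le_succ ?_)
  simp

lemma card4 {i j k l : Fin n} (hij : i ≠ j) (hik : i ≠ k) (hil : i ≠ l)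
    (hjk : j ≠ k) (hjl : j ≠ l) (hkl : k ≠ l) :
    ({i, j, k, l} : Finset (Fin n)).card = 4 := by
  rw [Finset.card_insert_of_notMem (by simp [hij, hik, hil]), card3 hjk hjl hkl]

lemma qDistinct_mk {i j k l : Fin n} (h : qDistinct (i, j, k, l)) :
    i ≠ j ∧ i ≠ k ∧ i ≠ l ∧ j ≠ k ∧ j ≠ l ∧ k ≠ l := by
  have h4 : ({i, j, k, l} : Finset (Fin n)).card = 4 := h
  have hi : i ∉ ({j, k, l} : Finset (Fin n)) := by
    intro him
    rw [show ({i, j, k, l} : Finset (Fin n)) = {j, k, l} from Finset.insert_eq_self.mpr him] at h4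
    have := card_le3 j k l; omega
  have h3 : ({j, k, l} : Finset (Fin n)).card = 3 := by
    rw [Finset.card_insert_of_notMem hi] at h4; omega
  have hj : j ∉ ({k, l} : Finset (Fin n)) := by
    intro hjm
    rw [show ({j, k, l} : Finset (Fin n)) = {k, l} from Finset.insert_eq_self.mpr hjm] at h3
    have := Finset.card_insert_le k ({l} : Finset (Fin n)); simp at this ⊢; omega
  have h2 : ({k, l} : Finset (Fin n)).card = 2 := by
    rw [Finset.card_insert_of_notMem hj] at h3; omega
  have hkl : k ≠ l := by
    intro hkl; subst hkl; simp at h2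
  simp only [Finset.mem_insert, Finset.mem_singleton, not_or] at hi hj
  exact ⟨hi.1, hi.2.1, hi.2.2, hj.1, hj.2, hkl⟩

lemma tri_comm (i j k : Fin n) : tri i j k = tri j i k := by
  have h : ({i, j, k} : Finset (Fin n)) = {j, i, k} := Finset.insert_comm i j {k}
  unfold tri
  rw [h]

/-- The image submodule. -/
noncomputable def Msub (n : ℕ) (φ : GammaHat n →* Multiplicative (ZThree n)) : Submodule ℤ (ZThree n) where
  carrier := {x | Multiplicative.ofAdd x ∈ φ.range}
  zero_mem' := by
    show Multiplicative.ofAdd (0 : ZThree n) ∈ φ.range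
    exact one_mem _
  add_mem' := by
    intro a b ha hb
    show Multiplicative.ofAdd (a + b) ∈ φ.range
    exact mul_mem ha hb
  smul_mem' := by
    intro c x hx
    show Multiplicative.ofAdd (c • x) ∈ φ.range
    rw [ofAdd_zsmul]
    exact zpow_mem hx c

variable {φ : GammaHat n →* Multiplicative (ZThree n)}

lemma mem_Msub {x : ZThree n} : x ∈ Msub n φ ↔ Multiplicative.ofAdd x ∈ φ.range := Iff.rfl

variable (hφ : ∀ i j k l : Fin n, qDistinct (i, j, k, l) →
    φ (gh (i, j, k, l)) =
      Multiplicative.ofAdd (tri i j k - tri i j l + tri i k l - tri j k l))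

include hφ

lemma v_mem {i j k l : Fin n} (h : qDistinct (i, j, k, l)) :
    tri i j k - tri i j l + tri i k l - tri j k l ∈ Msub n φ :=
  ⟨gh (i, j, k, l), (hφ i j k l h)⟩

lemma adj_mem {i j k l : Fin n} (h : qDistinct (i, j, k, l)) :
    (2 : ℤ) • (tri i j k - tri i j l) ∈ Msub n φ := by
  obtain ⟨hij, hik, hil, hjk, hjl, hkl⟩ := qDistinct_mk h
  have h2 : qDistinct (j, i, k, l) := card4 hij.symm hjk hjl hik hil hkl
  have e : (2 : ℤ) • (tri i j k - tri i j l) =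
      (tri i j k - tri i j l + tri i k l - tri j k l) +
      (tri j i k - tri j i l + tri j k l - tri i k l) := by
    rw [← tri_comm i j k, ← tri_comm i j l]; abel
  rw [e]
  exact add_mem (v_mem hφ h) (v_mem hφ h2)

noncomputable def chi (S : T3 n) : ZThree n := Finsupp.single S 1

lemma tri_eq_chi {i j k : Fin n} (h : ({i, j, k} : Finset (Fin n)).card = 3) :
    tri i j k = chi ⟨{i, j, k}, h⟩ := dif_pos h

omit hφ in
lemma chi_congr {S T : T3 n} (h : S.1 = T.1) : chi S = chi T := by
  congr 1; exact Subtype.ext h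

lemma step_mem (S : T3 n) {a b : Fin n} (ha : a ∈ S.1) (hb : b ∉ S.1)
    (hS' : (insert b (S.1.erase a)).card = 3) :
    (2 : ℤ) • (chi S - chi ⟨insert b (S.1.erase a), hS'⟩) ∈ Msub n φ := by
  have hR : (S.1.erase a).card = 2 := by rw [Finset.card_erase_of_mem ha, S.2]
  obtain ⟨i, j, hij, hRe⟩ := Finset.card_eq_two.mp hR
  have hai : a ≠ i := by intro h; subst h; exact Finset.notMem_erase a S.1 (hRe ▸ by simp)
  have haj : a ≠ j := by intro h; subst h; exact Finset.notMem_erase a S.1 (hRe ▸ by simp)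
  have hSa : S.1 = {i, j, a} := by
    have h1 : S.1 = insert a (S.1.erase a) := (Finset.insert_erase ha).symm
    rw [h1, hRe]; ext x; simp; tauto
  have hbS : b ∉ ({i, j, a} : Finset (Fin n)) := hSa ▸ hb
  simp only [Finset.mem_insert, Finset.mem_singleton, not_or] at hbS
  obtain ⟨hbi, hbj, hba⟩ := hbS
  have hq : qDistinct (i, j, a, b) :=
    card4 hij hai.symm (Ne.symm hbi) haj.symm (Ne.symm hbj) (Ne.symm hba)
  have h3a : ({i, j, a} : Finset (Fin n)).card = 3 := card3 hij hai.symm haj.symm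
  have h3b : ({i, j, b} : Finset (Fin n)).card = 3 := card3 hij (Ne.symm hbi) (Ne.symm hbj)
  have key := adj_mem hφ hq
  rw [tri_eq_chi hφ h3a, tri_eq_chi hφ h3b] at key
  have e1 : chi (⟨{i, j, a}, h3a⟩ : T3 n) = chi S := chi_congr hSa.symm
  have e2 : chi (⟨{i, j, b}, h3b⟩ : T3 n) = chi ⟨insert b (S.1.erase a), hS'⟩ := by
    apply chi_congr
    show ({i, j, b} : Finset (Fin n)) = insert b ((S : Finset (Fin n)).erase a)
    rw [hRe]; ext x; simp; tauto
  rwa [e1, e2] at key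

lemma chain_mem : ∀ (m : ℕ) (S T : T3 n), (S.1 \ T.1).card ≤ m →
    (2 : ℤ) • (chi S - chi T) ∈ Msub n φ := by
  intro m
  induction m with
  | zero =>
    intro S T h
    have : S.1 ⊆ T.1 := by
      rw [← Finset.sdiff_eq_empty_iff_subset]
      exact Finset.card_eq_zero.mp (Nat.le_zero.mp h)
    have hST : S = T := Subtype.ext (Finset.eq_of_subset_of_card_le this (by rw [S.2, T.2]))
    rw [hST]; simp
  | succ m ih =>
    intro S T h
    by_cases hST : S = T
    · rw [hST]; simp
    have hne : S.1 ≠ T.1 := fun h' => hST (Subtype.ext h')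
    have hSd : (S.1 \ T.1).Nonempty := by
      rw [Finset.sdiff_nonempty]
      intro hsub
      exact hne (Finset.eq_of_subset_of_card_le hsub (by rw [S.2, T.2]))
    obtain ⟨a, ha⟩ := hSd
    have hTd : (T.1 \ S.1).Nonempty := by
      rw [Finset.sdiff_nonempty]
      intro hsub
      exact hne (Finset.eq_of_subset_of_card_le hsub (by rw [S.2, T.2])).symm
    obtain ⟨b, hbT⟩ := hTd
    rw [Finset.mem_sdiff] at ha hbT
    have hb : b ∉ S.1 := hbT.2
    have haS : a ∈ S.1 := ha.1
    have hS' : (insert b (S.1.erase a)).card = 3 := by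
      rw [Finset.card_insert_of_notMem (fun hm => hb (Finset.erase_subset a S.1 hm)),
        Finset.card_erase_of_mem haS, S.2]
    set S' : T3 n := ⟨insert b (S.1.erase a), hS'⟩ with hS'def
    have hdcard : (S'.1 \ T.1).card ≤ m := by
      have hsub : S'.1 \ T.1 ⊆ (S.1 \ T.1).erase a := by
        intro x hx
        simp only [hS'def, Finset.mem_sdiff, Finset.mem_insert, Finset.mem_erase] at hx ⊢
        rcases hx.1 with hxb | hxe
        · exact absurd (hxb ▸ hbT.1) hx.2
        · exact ⟨hxe.1, hxe.2, hx.2⟩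
      calc (S'.1 \ T.1).card ≤ ((S.1 \ T.1).erase a).card := Finset.card_le_card hsub
        _ = (S.1 \ T.1).card - 1 := Finset.card_erase_of_mem (Finset.mem_sdiff.mpr ha)
        _ ≤ m := by omega
    have h1 := step_mem hφ S haS hb hS'
    have h2 := ih S' T hdcard
    have e : (2 : ℤ) • (chi S - chi T) =
        (2 : ℤ) • (chi S - chi S') + (2 : ℤ) • (chi S' - chi T) := by
      rw [← smul_add]; congr 1; abel
    rw [e]
    exact add_mem h1 h2

omit hφ in
lemma nonDistinct_gh_eq_one {q : Quad n} (h : ¬ qDistinct q) : gh q = 1 := by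
  apply (QuotientGroup.eq_one_iff _).mpr
  exact Subgroup.subset_normalClosure (Or.inl (Or.inl (Or.inl ⟨q, h, rfl⟩)))

/-- the augmentation -/
noncomputable def eps (n : ℕ) : ZThree n →ₗ[ℤ] ℤ :=
  Finsupp.linearCombination ℤ (fun _ : T3 n => (1 : ℤ))

omit hφ in
lemma eps_chi (S : T3 n) : eps n (chi S) = 1 := by
  simp [eps, chi, Finsupp.linearCombination_single]

omit hφ in
lemma eps_tri {i j k : Fin n} (h : ({i, j, k} : Finset (Fin n)).card = 3) :
    eps n (tri i j k) = 1 := by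
  rw [show tri i j k = chi ⟨{i,j,k}, h⟩ from dif_pos h]; exact eps_chi _

lemma Msub_le_ker : ∀ x ∈ Msub n φ, eps n x = 0 := by
  have key : ∀ g : GammaHat n, eps n (Multiplicative.toAdd (φ g)) = 0 := by
    have hgen : ∀ q : Quad n, eps n (Multiplicative.toAdd (φ (gh q))) = 0 := by
      intro q
      by_cases hq : qDistinct q
      · obtain ⟨i, j, k, l⟩ := q
        rw [hφ i j k l hq]
        obtain ⟨hij, hik, hil, hjk, hjl, hkl⟩ := qDistinct_mk hq
        simp only [toAdd_ofAdd, map_sub, map_add]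
        rw [eps_tri (card3 hij hik hjk), eps_tri (card3 hij hil hjl),
          eps_tri (card3 hik hil hkl), eps_tri (card3 hjk hjl hkl)]
        ring
      · rw [nonDistinct_gh_eq_one hq, map_one]; simp
    intro g
    refine PresentedGroup.induction_on (C := fun g => eps n (Multiplicative.toAdd (φ g)) = 0) g ?_
    intro z
    induction z using FreeGroup.induction_on with
      | C1 => rw [map_one, map_one]; simp
      | of q => exact hgen q
      | inv_of q hq =>
        rw [map_inv, map_inv]
        simp only [toAdd_inv, map_neg]
        rw [hq]; ring
      | mul x y hx hy =>
        rw [map_mul, map_mul]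
        simp only [toAdd_mul, map_add]
        rw [hx, hy]; ring
  rintro x ⟨g, hg⟩
  have := key g
  rw [hg] at this
  simpa using this


omit hφ in
lemma card_ne (S₀ : T3 n) :
    Fintype.card {S : T3 n // S ≠ S₀} = n.choose 3 - 1 := by
  have h1 : Fintype.card {S : T3 n // S ≠ S₀} = Fintype.card (T3 n) - 1 := by
    rw [Fintype.card_subtype_compl, Fintype.card_subtype_eq]
  rw [h1]
  congr 1
  simpa using Fintype.card_finset_len (α := Fin n) 3

/-- the restriction map forgetting the `S₀` coordinate -/
def rho (S₀ : T3 n) : ZThree n →ₗ[ℤ] ({S : T3 n // S ≠ S₀} → ℤ) where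
  toFun x := fun S => x S.1
  map_add' x y := by funext S; simp
  map_smul' c x := by funext S; simp

lemma upper_bound (S₀ : T3 n) : Module.finrank ℤ (Msub n φ) ≤ n.choose 3 - 1 := by
  have hinj : Function.Injective ((rho S₀).comp (Msub n φ).subtype) := by
    rw [injective_iff_map_eq_zero]
    intro x hx
    have hcoords : ∀ U : T3 n, U ≠ S₀ → (x : ZThree n) U = 0 := by
      intro U hU
      exact congrFun hx ⟨U, hU⟩
    have hx1 : (x : ZThree n) = Finsupp.single S₀ ((x : ZThree n) S₀) := by
      ext U
      by_cases hU : U = S₀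
      · subst hU; simp
      · rw [hcoords U hU, Finsupp.single_apply, if_neg (fun h => hU h.symm)]
    have heps := Msub_le_ker hφ (x : ZThree n) x.2
    rw [hx1] at heps
    simp only [eps, Finsupp.linearCombination_single, smul_eq_mul, mul_one] at heps
    apply Subtype.ext
    rw [hx1, heps, Finsupp.single_zero]
    rfl
  calc Module.finrank ℤ (Msub n φ) ≤ Module.finrank ℤ ({S : T3 n // S ≠ S₀} → ℤ) :=
        LinearMap.finrank_le_finrank_of_injective hinj
    _ = Fintype.card {S : T3 n // S ≠ S₀} := Module.finrank_pi ℤ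
    _ = n.choose 3 - 1 := card_ne S₀

lemma lower_bound (S₀ : T3 n) : n.choose 3 - 1 ≤ Module.finrank ℤ (Msub n φ) := by
  set w : {S : T3 n // S ≠ S₀} → Msub n φ := fun S =>
    ⟨(2 : ℤ) • (chi S.1 - chi S₀),
      chain_mem hφ 3 S.1 S₀ (by
        calc ((S.1 : Finset (Fin n)) \ S₀.1).card ≤ (S.1 : Finset (Fin n)).card :=
              Finset.card_le_card (Finset.sdiff_subset)
          _ = 3 := S.1.2)⟩ with hwexpr
  have hkey : ∀ (S T : {S : T3 n // S ≠ S₀}),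
      (((2 : ℤ) • (chi T.1 - chi S₀) : ZThree n)) S.1 = if T = S then 2 else 0 := by
    intro S T
    have hS : S₀ ≠ S.1 := Ne.symm S.2
    by_cases hTS : T = S
    · subst hTS
      simp [chi, Finsupp.single_apply, hS]
    · have hT1 : T.1 ≠ S.1 := fun h => hTS (Subtype.ext h)
      simp [chi, Finsupp.single_apply, hS, hT1, hTS]
  have hw : LinearIndependent ℤ w := by
    apply LinearIndependent.of_comp (Msub n φ).subtype
    rw [linearIndependent_iff']
    intro s g hsum S hS
    have happ : (∑ T ∈ s, g T • (((Msub n φ).subtype ∘ w) T)) S.1 = (0 : ℤ) := by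
      rw [hsum]; rfl
    rw [Finsupp.finset_sum_apply] at happ
    have hterm : ∀ T ∈ s, (g T • (((Msub n φ).subtype ∘ w) T)) S.1 =
        if T = S then g T * 2 else 0 := by
      intro T _
      rw [Finsupp.smul_apply]
      have : (((Msub n φ).subtype ∘ w) T : ZThree n) = (2 : ℤ) • (chi T.1 - chi S₀) := rfl
      rw [this, hkey S T]
      by_cases hTS : T = S <;> simp [hTS]
    rw [Finset.sum_congr rfl hterm, Finset.sum_ite_eq' s S (fun T => g T * 2),
      if_pos hS] at happ
    omega
  calc n.choose 3 - 1 = Fintype.card {S : T3 n // S ≠ S₀} := (card_ne S₀).symm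
    _ ≤ Module.finrank ℤ (Msub n φ) := hw.fintype_card_le_finrank

omit hφ in
/-- the range of `φ` is `Multiplicative` of the submodule `Msub`. -/
noncomputable def rangeEquiv : φ.range ≃* Multiplicative (Msub n φ) where
  toFun x := Multiplicative.ofAdd
    (⟨Multiplicative.toAdd (x : Multiplicative (ZThree n)), x.2⟩ : Msub n φ)
  invFun y := ⟨Multiplicative.ofAdd ((Multiplicative.toAdd y : Msub n φ) : ZThree n),
    (Multiplicative.toAdd y).2⟩
  left_inv x := rfl
  right_inv y := rfl
  map_mul' x y := rfl

end KMaux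

/-- For every `n ≥ 4`, the image of the homomorphism `Φ₃ : Γ̂_n^4 → ℤ[n]_3`
(the homomorphism determined by `Φ₃((ijkl)) = {i,j,k} - {i,j,l} + {i,k,l} - {j,k,l}`)
is a free abelian group of rank `N_n = C(n,3) - 1`. -/
theorem gammaHat_Phi3_image (n : ℕ) (hn : 4 ≤ n)
    (φ : GammaHat n →* Multiplicative (ZThree n))
    (hφ : ∀ i j k l : Fin n, qDistinct (i, j, k, l) →
      φ (gh (i, j, k, l)) =
        Multiplicative.ofAdd (tri i j k - tri i j l + tri i k l - tri j k l)) :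
    Nonempty (φ.range ≃* Multiplicative (Fin (n.choose 3 - 1) → ℤ)) := by
  classical
  have h0 : (0 : ℕ) < n := by omega
  have h1 : (1 : ℕ) < n := by omega
  have h2 : (2 : ℕ) < n := by omega
  have S₀ : KMaux.T3 n := ⟨{⟨0, h0⟩, ⟨1, h1⟩, ⟨2, h2⟩},
    KMaux.card3 (by simp [Fin.ext_iff]) (by simp [Fin.ext_iff]) (by simp [Fin.ext_iff])⟩
  have hrank : Module.finrank ℤ (KMaux.Msub n φ) = n.choose 3 - 1 :=
    le_antisymm (KMaux.upper_bound hφ S₀) (KMaux.lower_bound hφ S₀)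
  let b := Module.finBasis ℤ (KMaux.Msub n φ)
  let e : KMaux.Msub n φ ≃ₗ[ℤ] (Fin (n.choose 3 - 1) → ℤ) :=
    (b.reindex (finCongr hrank)).equivFun
  exact ⟨(KMaux.rangeEquiv (φ := φ)).trans (AddEquiv.toMultiplicative e.toAddEquiv)⟩
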